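/- Let H be a σ-MAG with nodes V and let a, b ∈ V be distinct. If there exists an inducing path between a and b in H that is into b (its edge incident to b has an arrowhead at b), and a ∉ Anc_H(b), then there exists an inducing path between a and b in H that is both into a and into b. -/

import Mathlib

/-- An edge mark: tail or arrowhead. -/
inductive Mark : Type
  | tail : Mark
  | arrow : Mark
  deriving DecidableEq

/-- A mixed graph, with directed edges (`dir a b` means `a → b`), bidirected edges and
undirected edges. -/
structure MixedGraph (V : Type*) where
  dir : V → V → Prop
  bidir : V → V → Prop
  undir : V → V → Prop
  bidir_symm : ∀ a b, bidir a b → bidir b a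
  undir_symm : ∀ a b, undir a b → undir b a

variable {V : Type*}

/-- There is an edge between `x` and `y` carrying mark `m₁` at `x` and mark `m₂` at `y`. -/
def MixedGraph.EdgeMk (G : MixedGraph V) (x y : V) : Mark → Mark → Prop
  | Mark.tail, Mark.arrow => G.dir x y
  | Mark.arrow, Mark.tail => G.dir y x
  | Mark.arrow, Mark.arrow => G.bidir x y
  | Mark.tail, Mark.tail => G.undir x y

theorem MixedGraph.edgeMk_symm {G : MixedGraph V} {x y : V} {m₁ m₂ : Mark}
    (h : G.EdgeMk x y m₁ m₂) : G.EdgeMk y x m₂ m₁ := by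
  cases m₁ <;> cases m₂ <;>
    first
      | exact h
      | exact G.bidir_symm _ _ h
      | exact G.undir_symm _ _ h

/-- `x` and `y` are adjacent: some edge joins them. -/
def MixedGraph.Adj (G : MixedGraph V) (x y : V) : Prop :=
  G.dir x y ∨ G.dir y x ∨ G.bidir x y ∨ G.undir x y

/-- There is an edge between `a` and `b` with an arrowhead at `a` (i.e. `a ←∗ b`). -/
def MixedGraph.ArrowAt (G : MixedGraph V) (a b : V) : Prop :=
  G.dir b a ∨ G.bidir a b

/-- There is an edge between `a` and `b` with a tail at `a` (i.e. `a —∗ b`). -/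
def MixedGraph.TailAt (G : MixedGraph V) (a b : V) : Prop :=
  G.dir a b ∨ G.undir a b

/-- A walk of length `n`: vertices `vert 0, …, vert n`; the `i`-th edge joins `vert i`
and `vert (i+1)`, carrying mark `mk1 i` at `vert i` and mark `mk2 i` at `vert (i+1)`. -/
structure MixedGraph.Walk (G : MixedGraph V) (n : ℕ) where
  vert : ℕ → V
  mk1 : ℕ → Mark
  mk2 : ℕ → Mark
  valid : ∀ i < n, G.EdgeMk (vert i) (vert (i + 1)) (mk1 i) (mk2 i)

/-- A walk is a path if its vertices are pairwise distinct. -/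
def MixedGraph.Walk.IsPath {G : MixedGraph V} {n : ℕ} (w : G.Walk n) : Prop :=
  ∀ i j, i ≤ n → j ≤ n → w.vert i = w.vert j → i = j

/-- Position `k` is a collider on the walk: both incident edges have an arrowhead
at `vert k`. -/
def MixedGraph.Walk.IsCollider {G : MixedGraph V} {n : ℕ} (w : G.Walk n) (k : ℕ) : Prop :=
  0 < k ∧ k < n ∧ w.mk2 (k - 1) = Mark.arrow ∧ w.mk1 k = Mark.arrow

/-- `a` is an ancestor of `b`: there is a directed walk from `a` to `b`. -/
def MixedGraph.Anc (G : MixedGraph V) (a b : V) : Prop :=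
  Relation.ReflTransGen G.dir a b

/-- `a` is an ancestor of some element of `A`. -/
def MixedGraph.AncS (G : MixedGraph V) (a : V) (A : Set V) : Prop :=
  ∃ b ∈ A, G.Anc a b

/-- `b` lies in the strongly connected component of `a`. -/
def MixedGraph.Sc (G : MixedGraph V) (a b : V) : Prop :=
  G.Anc a b ∧ G.Anc b a

/-- There is an anterior path from `a` to `b`: a path all of whose edges have a tail
mark at the endpoint nearer `a`. -/
def MixedGraph.AnteriorPath (G : MixedGraph V) (a b : V) : Prop :=
  ∃ (n : ℕ) (w : G.Walk n), w.IsPath ∧ w.vert 0 = a ∧ w.vert n = b ∧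
    ∀ i < n, w.mk1 i = Mark.tail

/-- The walk is inducing: every non-endpoint node is a collider that is an ancestor
of one of the endpoints. -/
def MixedGraph.Walk.IsInducing {G : MixedGraph V} {n : ℕ} (w : G.Walk n) : Prop :=
  ∀ k, 0 < k → k < n →
    w.IsCollider k ∧ (G.Anc (w.vert k) (w.vert 0) ∨ G.Anc (w.vert k) (w.vert n))

/-- There is an inducing path between `a` and `b`. -/
def MixedGraph.InducingPath (G : MixedGraph V) (a b : V) : Prop :=
  ∃ (n : ℕ) (w : G.Walk n), w.IsPath ∧ w.vert 0 = a ∧ w.vert n = b ∧ w.IsInducing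

/-- There is an inducing walk between `a` and `b`. -/
def MixedGraph.InducingWalk (G : MixedGraph V) (a b : V) : Prop :=
  ∃ (n : ℕ) (w : G.Walk n), w.vert 0 = a ∧ w.vert n = b ∧ w.IsInducing

/-- The neighborhood of `a` (its undirected-edge neighbors) is complete. -/
def MixedGraph.CompleteNbh (G : MixedGraph V) (a : V) : Prop :=
  ∀ b c, G.undir a b → G.undir a c → b ≠ c → G.undir b c

/-- A σ-maximal ancestral graph (σ-MAG). -/
structure MixedGraph.IsSigmaMAG (G : MixedGraph V) : Prop where
  /-- no self-loops -/
  no_self : ∀ a : V, ¬ G.dir a a ∧ ¬ G.bidir a a ∧ ¬ G.undir a a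
  /-- at most one edge between any two nodes -/
  at_most_one : ∀ a b : V,
    (G.dir a b → ¬ G.dir b a ∧ ¬ G.bidir a b ∧ ¬ G.undir a b) ∧
    (G.bidir a b → ¬ G.undir a b)
  /-- ancestral: an anterior path from `a` to `b` excludes an edge into `a` -/
  ancestral : ∀ a b : V, G.AnteriorPath a b → ¬ G.ArrowAt a b
  /-- maximal: no inducing path between non-adjacent nodes -/
  maximal : ∀ a b : V, a ≠ b → ¬ G.Adj a b → ¬ G.InducingPath a b
  /-- σ-complete, part 1: `a ∗→ b — c` forces `a, c` adjacent -/
  sigma_complete₁ : ∀ a b c : V, G.ArrowAt b a → G.undir b c → G.Adj a c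
  /-- σ-complete, part 2: `a ∗→ b — c` and `b — d` force `c, d` adjacent -/
  sigma_complete₂ : ∀ a b c d : V, G.ArrowAt b a → G.undir b c → G.undir b d →
    c ≠ d → G.Adj c d

/-- The walk is m-open given `Z`. -/
def MixedGraph.Walk.MOpen {G : MixedGraph V} {n : ℕ} (w : G.Walk n) (Z : Set V) : Prop :=
  (∀ k ≤ n, ¬ w.IsCollider k → w.vert k ∉ Z) ∧
  (∀ k, w.IsCollider k → G.AncS (w.vert k) Z) ∧
  (∀ k, 0 < k → k < n →
    ¬ (w.mk2 (k - 1) = Mark.arrow ∧ w.mk1 k = Mark.tail ∧ w.mk2 k = Mark.tail) ∧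
    ¬ (w.mk1 (k - 1) = Mark.tail ∧ w.mk2 (k - 1) = Mark.tail ∧ w.mk1 k = Mark.arrow))

/-- `X` is m-separated from `Y` given `Z`: every walk from `X` to `Y` is m-blocked. -/
def MixedGraph.MSep (G : MixedGraph V) (X Y Z : Set V) : Prop :=
  ∀ (n : ℕ) (w : G.Walk n), w.vert 0 ∈ X → w.vert n ∈ Y → ¬ w.MOpen Z

/-- A directed mixed graph (DMG): no undirected edges and no self-loops. -/
def MixedGraph.IsDMG (G : MixedGraph V) : Prop :=
  (∀ a b : V, ¬ G.undir a b) ∧ ∀ a : V, ¬ G.dir a a ∧ ¬ G.bidir a a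

/-- Position `k` is an unblockable non-collider on the walk (in a DMG). -/
def MixedGraph.Walk.Unblockable {G : MixedGraph V} {n : ℕ} (w : G.Walk n) (k : ℕ) : Prop :=
  0 < k ∧ k < n ∧
  ((w.mk1 (k - 1) = Mark.arrow ∧ w.mk2 (k - 1) = Mark.tail ∧ w.mk1 k = Mark.arrow ∧
      G.Sc (w.vert k) (w.vert (k - 1))) ∨
   (w.mk2 (k - 1) = Mark.arrow ∧ w.mk1 k = Mark.tail ∧ w.mk2 k = Mark.arrow ∧
      G.Sc (w.vert k) (w.vert (k + 1))) ∨
   (w.mk1 (k - 1) = Mark.arrow ∧ w.mk2 (k - 1) = Mark.tail ∧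
      w.mk1 k = Mark.tail ∧ w.mk2 k = Mark.arrow ∧
      G.Sc (w.vert k) (w.vert (k - 1)) ∧ G.Sc (w.vert k) (w.vert (k + 1))))

/-- The walk is σ-open given `W`. -/
def MixedGraph.Walk.SigmaOpen {G : MixedGraph V} {n : ℕ} (w : G.Walk n) (W : Set V) : Prop :=
  (∀ k, w.IsCollider k → G.AncS (w.vert k) W) ∧
  (∀ k ≤ n, ¬ w.IsCollider k → ¬ w.Unblockable k → w.vert k ∉ W)

/-- `X` is σ-separated from `Y` given `W`: every walk from `X` to `Y` is σ-blocked. -/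
def MixedGraph.SigmaSep (G : MixedGraph V) (X Y W : Set V) : Prop :=
  ∀ (n : ℕ) (w : G.Walk n), w.vert 0 ∈ X → w.vert n ∈ Y → ¬ w.SigmaOpen W

/-- The walk is σ-inducing given `S`: each collider is an ancestor of the endpoints or
of `S`, and each non-endpoint non-collider is unblockable. -/
def MixedGraph.Walk.IsSigmaInducing {G : MixedGraph V} {n : ℕ} (w : G.Walk n) (S : Set V) :
    Prop :=
  (∀ k, w.IsCollider k → G.AncS (w.vert k) ({w.vert 0, w.vert n} ∪ S)) ∧
  (∀ k, 0 < k → k < n → ¬ w.IsCollider k → w.Unblockable k)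

/-- There is a σ-inducing path given `S` between `a` and `b`. -/
def MixedGraph.SigmaInducingPath (G : MixedGraph V) (S : Set V) (a b : V) : Prop :=
  ∃ (n : ℕ) (w : G.Walk n), w.IsPath ∧ w.vert 0 = a ∧ w.vert n = b ∧ w.IsSigmaInducing S

/-- The mixed graph `H` (on node set `V`) represents the graph `G` (on node set
`V⁺ = V ∪ S`, where `V` is embedded via `ι` and `S = (Set.range ι)ᶜ` is the set of
selection nodes) given `S`. -/
def Represents {V W : Type*} (H : MixedGraph V) (G : MixedGraph W) (ι : V → W) : Prop :=
  Function.Injective ι ∧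
  (∀ a : V, ¬ H.dir a a ∧ ¬ H.bidir a a ∧ ¬ H.undir a a) ∧
  (∀ a b : V,
    (H.dir a b → ¬ H.dir b a ∧ ¬ H.bidir a b ∧ ¬ H.undir a b) ∧
    (H.bidir a b → ¬ H.undir a b)) ∧
  (∀ a b : V, a ≠ b → (H.Adj a b ↔ G.SigmaInducingPath (Set.range ι)ᶜ (ι a) (ι b))) ∧
  (∀ a b : V, H.ArrowAt a b → ¬ G.AncS (ι a) ({ι b} ∪ (Set.range ι)ᶜ)) ∧
  (∀ a b : V, H.TailAt a b → G.AncS (ι a) ({ι b} ∪ (Set.range ι)ᶜ))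

/-- The walk (of length `n ≥ 3`) is a discriminating path for its second-to-last node
`vert (n-1)`: the endpoints are non-adjacent, and every node strictly between `vert 0`
and `vert (n-1)` is a collider and a parent of `vert n`. -/
def MixedGraph.Walk.IsDiscriminating {G : MixedGraph V} {n : ℕ} (w : G.Walk n) : Prop :=
  3 ≤ n ∧ w.IsPath ∧ ¬ G.Adj (w.vert 0) (w.vert n) ∧
  ∀ k, 0 < k → k < n - 1 → w.IsCollider k ∧ G.dir (w.vert k) (w.vert n)

/-- The subwalk starting at position `i`, of length `m`. -/
def MixedGraph.Walk.shift {G : MixedGraph V} {n : ℕ} (w : G.Walk n) (i m : ℕ)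
    (h : i + m ≤ n) : G.Walk m where
  vert k := w.vert (i + k)
  mk1 k := w.mk1 (i + k)
  mk2 k := w.mk2 (i + k)
  valid k hk := by
    have hv := w.valid (i + k) (by omega)
    have he : i + (k + 1) = i + k + 1 := by omega
    show G.EdgeMk (w.vert (i + k)) (w.vert (i + (k + 1))) (w.mk1 (i + k)) (w.mk2 (i + k))
    rw [he]
    exact hv

/-- The reversed walk. -/
def MixedGraph.Walk.reverse {G : MixedGraph V} {n : ℕ} (w : G.Walk n) : G.Walk n where
  vert k := w.vert (n - k)
  mk1 k := w.mk2 (n - 1 - k)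
  mk2 k := w.mk1 (n - 1 - k)
  valid i hi := by
    have hv := w.valid (n - 1 - i) (by omega)
    have h1 : n - 1 - i + 1 = n - i := by omega
    have h2 : n - (i + 1) = n - 1 - i := by omega
    rw [h1] at hv
    show G.EdgeMk (w.vert (n - i)) (w.vert (n - (i + 1))) (w.mk2 (n - 1 - i)) (w.mk1 (n - 1 - i))
    rw [h2]
    exact MixedGraph.edgeMk_symm hv

/-- `(a, b, c)` is an unshielded collider in `G`. -/
def MixedGraph.UnshieldedCollider (G : MixedGraph V) (a b c : V) : Prop :=
  a ≠ c ∧ ¬ G.Adj a c ∧ G.ArrowAt b a ∧ G.ArrowAt b c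

/-- Condition 1 for two σ-MAGs on the same node set: same adjacencies, same unshielded
colliders, and agreement of the collider status of the discriminated node on
corresponding discriminating paths. -/
def Condition1 {V : Type*} (H₁ H₂ : MixedGraph V) : Prop :=
  (∀ a b, H₁.Adj a b ↔ H₂.Adj a b) ∧
  (∀ a b c, H₁.UnshieldedCollider a b c ↔ H₂.UnshieldedCollider a b c) ∧
  (∀ (n : ℕ) (w₁ : H₁.Walk n) (w₂ : H₂.Walk n),
    (∀ k, w₂.vert k = w₁.vert k) →
    w₁.IsDiscriminating → w₂.IsDiscriminating →
    (w₁.IsCollider (n - 1) ↔ w₂.IsCollider (n - 1)))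

/-- `H₁` and `H₂` are m-Markov equivalent. -/
def MMarkovEquiv {V : Type*} (H₁ H₂ : MixedGraph V) : Prop :=
  ∀ X Y Z : Set V, H₁.MSep X Y Z ↔ H₂.MSep X Y Z


open List in
theorem exists_nodup_chain' {α : Type*} {r : α → α → Prop} :
    ∀ (N : ℕ) (l : List α) (a b : α), l.length ≤ N → Chain r a l →
      getLast (a :: l) (cons_ne_nil _ _) = b →
      ∃ m, Chain r a m ∧ getLast (a :: m) (cons_ne_nil _ _) = b ∧ (a :: m).Nodup := by
  intro N
  induction N with
  | zero =>
    intro l a b hl hc hlast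
    have : l = [] := List.eq_nil_of_length_eq_zero (Nat.le_zero.mp hl)
    subst this
    exact ⟨[], Chain.nil, hlast, List.nodup_singleton a⟩
  | succ N ih =>
    intro l a b hl hc hlast
    cases l with
    | nil => exact ⟨[], Chain.nil, hlast, List.nodup_singleton a⟩
    | cons c t =>
      rw [show Chain r a (c :: t) ↔ IsChain r (a :: c :: t) from Iff.rfl, List.isChain_cons_cons] at hc
      obtain ⟨hrac, hct⟩ := hc
      rw [List.getLast_cons_cons] at hlast
      obtain ⟨m, hm1, hm2, hm3⟩ := ih t c b (by simpa using hl) hct hlast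
      by_cases hmem : a ∈ c :: m
      · obtain ⟨s, u, hsu⟩ := List.append_of_mem hmem
        have hsuf : (a :: u) <:+ (c :: m) := ⟨s, hsu.symm⟩
        have hchain : Chain r a u := by
          have := (List.isChain_cons_cons.mpr ⟨hrac, hm1⟩ : IsChain r (a :: c :: m)).suffix
            (hsuf.trans ((c :: m).suffix_cons a))
          exact this
        refine ⟨u, hchain, ?_, hm3.sublist hsuf.sublist⟩
        exact ((List.getLast_append_of_right_ne_nil s (a :: u) (cons_ne_nil _ _)).symm.trans
          (List.getLast_congr (by simp) (cons_ne_nil _ _) hsu.symm)).trans hm2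
      · exact ⟨c :: m, List.chain_cons.mpr ⟨hrac, hm1⟩, by rwa [List.getLast_cons_cons],
          List.nodup_cons.mpr ⟨hmem, hm3⟩⟩

/-- From a directed reachability, build an anterior path (all tails at the near end). -/
theorem MixedGraph.anc_anteriorPath (G : MixedGraph V) {x y : V} (h : G.Anc x y) :
    G.AnteriorPath x y := by
  obtain ⟨l0, hc0, hlast0⟩ := List.exists_isChain_cons_of_relationReflTransGen h
  obtain ⟨l, hc, hlast, hnd⟩ := exists_nodup_chain' l0.length l0 x y le_rfl hc0 hlast0
  set L : List V := x :: l with hL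
  have hLlen : L.length = l.length + 1 := rfl
  refine ⟨l.length, ⟨fun k => L.getD k y, fun _ => Mark.tail, fun _ => Mark.arrow, ?_⟩,
    ?_, ?_, ?_, fun i _ => rfl⟩
  · intro i hi
    have h1 : i < L.length := by omega
    have h2 : i + 1 < L.length := by omega
    show G.dir (L.getD i y) (L.getD (i + 1) y)
    rw [List.getD_eq_getElem L y h1, List.getD_eq_getElem L y h2]
    have := List.isChain_iff_getElem.mp (show List.IsChain G.dir L from hc) i (by omega)
    simpa [List.get_eq_getElem] using this
  · intro i j hi hj hij
    have h1 : i < L.length := by omega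
    have h2 : j < L.length := by omega
    have hij' : L.getD i y = L.getD j y := hij
    rw [List.getD_eq_getElem L y h1, List.getD_eq_getElem L y h2] at hij'
    exact (List.Nodup.getElem_inj_iff hnd).mp hij'
  · rfl
  · show L.getD l.length y = y
    rw [List.getD_eq_getElem L y (by omega)]
    have h5 := hlast
    rw [List.getLast_eq_getElem] at h5
    simpa using h5

/-- If there is an inducing path between distinct nodes `a` and `b` of a σ-MAG `H` that
is into `b` (arrowhead at `b`), and `a ∉ Anc_H(b)`, then there is an inducing path
between `a` and `b` that is both into `a` and into `b`. -/
theorem inducing_into_b_exists_into_both {V : Type*} (H : MixedGraph V)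
    (hH : H.IsSigmaMAG) (a b : V) (hab : a ≠ b)
    (hex : ∃ (n : ℕ) (w : H.Walk n), w.IsPath ∧ w.vert 0 = a ∧ w.vert n = b ∧
      w.IsInducing ∧ w.mk2 (n - 1) = Mark.arrow)
    (hanc : ¬ H.Anc a b) :
    ∃ (n : ℕ) (w : H.Walk n), w.IsPath ∧ w.vert 0 = a ∧ w.vert n = b ∧
      w.IsInducing ∧ w.mk1 0 = Mark.arrow ∧ w.mk2 (n - 1) = Mark.arrow := by
  obtain ⟨n, w, hpath, h0, hn, hind, hin⟩ := hex
  have hn0 : n ≠ 0 := by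
    rintro rfl
    exact hab (h0 ▸ hn)
  cases h1 : w.mk1 0 with
  | arrow => exact ⟨n, w, hpath, h0, hn, hind, h1, hin⟩
  | tail =>
    exfalso
    rcases Nat.lt_or_ge 1 n with h2 | h2
    · obtain ⟨⟨_, _, hc2, _⟩, hanc1⟩ := hind 1 one_pos h2
      have hv := w.valid 0 (by omega)
      have hc2' : w.mk2 0 = Mark.arrow := hc2
      rw [h1, hc2'] at hv
      have hd : H.dir (w.vert 0) (w.vert 1) := hv
      cases hanc1 with
      | inl hA =>
        exact hH.ancestral _ _ (H.anc_anteriorPath hA) (Or.inl hd)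
      | inr hB =>
        exact hanc (h0 ▸ hn ▸ Relation.ReflTransGen.head hd hB)
    · have hn1 : n = 1 := by omega
      subst hn1
      have hv := w.valid 0 one_pos
      rw [h1, hin] at hv
      exact hanc (h0 ▸ hn ▸ Relation.ReflTransGen.single hv)
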